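/- arXiv:1210.8437 — 5 statements merged into one kernel-verified Lean document; each statement's English description precedes it below -/
import Mathlib

section
/- The coefficient of x^(n(n+1)/4) in the polynomial expansion of (1+x)(1+x^2)···(1+x^n) equals (2^(n-1)/π) ∫₀^{2π} cos(t)cos(2t)···cos(nt) dt, for positive integers n with n ≡ 0 or 3 (mod 4). -/
open Real Finset

open Complex in
private lemma int_exp_zero' (z : ℤ) (hz : z ≠ 0) :
    ∫ t in (0:ℝ)..(2*Real.pi), Complex.exp ((z : ℂ) * Complex.I * t) = 0 := by
  have hc : (z : ℂ) * I ≠ 0 := by simp [Complex.I_ne_zero, hz]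
  rw [integral_exp_mul_complex hc]
  have h1 : (z:ℂ) * I * ((2*Real.pi : ℝ) : ℂ) = z * (2*Real.pi*I) := by push_cast; ring
  have h2 : (z:ℂ) * I * ((0:ℝ) : ℂ) = 0 := by simp
  rw [h1, h2, Complex.exp_int_mul_two_pi_mul_I, Complex.exp_zero, sub_self, zero_div]

open Complex in
private lemma factor_eq' (k : ℕ) (t : ℝ) :
    (1:ℂ) + Complex.exp (2*I*t) ^ k = 2 * Complex.cos (k*t) * Complex.exp (I*(k*t)) := by
  rw [Complex.cos, ← Complex.exp_nat_mul]
  have h : (2:ℂ) * ((cexp (↑k * ↑t * I) + cexp (-(↑k * ↑t) * I)) / 2) * cexp (I * (↑k*↑t))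
      = cexp (↑k * ↑t * I + I * (↑k*↑t)) + cexp (-(↑k * ↑t) * I + I * (↑k*↑t)) := by
    rw [Complex.exp_add, Complex.exp_add]; ring
  rw [h]
  have h2 : (-(↑k*↑t)*I : ℂ) + I*(↑k*↑t) = 0 := by ring
  have h3 : ((k:ℂ)*↑t*I : ℂ) + I*(↑k*↑t) = k * (2*I*t) := by ring
  rw [h2, h3, Complex.exp_zero, add_comm]

private lemma gauss' (n : ℕ) : (∑ k ∈ Icc 1 n, k) * 2 = n * (n+1) := by
  have h1 : ∑ k ∈ Icc 1 n, k = ∑ k ∈ range (n+1), k := by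
    rw [Finset.range_eq_Ico, ← Finset.Ico_add_one_right_eq_Icc]
    rw [Finset.sum_eq_sum_Ico_succ_bot (Nat.succ_pos n)]
    simp
  rw [h1, Finset.sum_range_id_mul_two]
  simp [Nat.mul_comm]

theorem stmt_0 (n : ℕ) (hn : 0 < n) (h : n % 4 = 0 ∨ n % 4 = 3) :
    ((∏ k ∈ Finset.Icc 1 n, ((1 : Polynomial ℤ) + Polynomial.X ^ k)).coeff (n * (n + 1) / 4) : ℝ)
      = 2 ^ (n - 1) / π * ∫ t in (0:ℝ)..(2 * π), ∏ k ∈ Finset.Icc 1 n, Real.cos (k * t) := by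
  classical
  set P : Polynomial ℤ := ∏ k ∈ Finset.Icc 1 n, ((1 : Polynomial ℤ) + Polynomial.X ^ k) with hPdef
  set S : ℕ := ∑ k ∈ Icc 1 n, k with hSdef
  set N : ℕ := n * (n + 1) / 4 with hNdef
  have h4 : 4 ∣ n * (n + 1) := by
    rcases h with h | h
    · exact Dvd.dvd.mul_right (Nat.dvd_of_mod_eq_zero h) _
    · refine Dvd.dvd.mul_left (Nat.dvd_of_mod_eq_zero ?_) _
      omega
  have hSN : S = 2 * N := by
    have hg := gauss' n
    have : n * (n+1) = 4 * N := (Nat.div_mul_cancel h4).symm.trans (by ring)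
    omega
  -- the mapped polynomial
  set Q : Polynomial ℂ := P.map (Int.castRingHom ℂ) with hQdef
  have hQcoeff : ∀ j, Q.coeff j = ((P.coeff j : ℤ) : ℂ) := by
    intro j; simp [hQdef, Polynomial.coeff_map]
  set d : ℕ := P.natDegree + 1 with hddef
  have hQdeg : Q.natDegree < d :=
    lt_of_le_of_lt Polynomial.natDegree_map_le (Nat.lt_succ_self _)
  -- the key pointwise identity
  set g : ℕ → ℝ → ℂ := fun j t => Complex.exp (((2*(j:ℤ) - (S:ℤ) : ℤ) : ℂ) * Complex.I * t) with hgdef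
  have key : ∀ t : ℝ, (∏ k ∈ Icc 1 n, Complex.cos (k * t))
      = (∑ j ∈ range d, ((P.coeff j : ℤ) : ℂ) * g j t) / 2 ^ n := by
    intro t
    have heval : Q.eval (Complex.exp (2*Complex.I*t))
        = 2^n * Complex.exp (Complex.I * S * t) * ∏ k ∈ Icc 1 n, Complex.cos (k * t) := by
      have e1 : Q = ∏ k ∈ Finset.Icc 1 n, ((1 : Polynomial ℂ) + Polynomial.X ^ k) := by
        simp [hQdef, hPdef, Polynomial.map_prod]
      rw [e1, Polynomial.eval_prod]
      have e2 : ∀ k ∈ Icc 1 n, Polynomial.eval (Complex.exp (2*Complex.I*t))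
          ((1 : Polynomial ℂ) + Polynomial.X ^ k)
          = 2 * Complex.cos (k*t) * Complex.exp (Complex.I*(k*t)) := by
        intro k _
        simp [Polynomial.eval_add, Polynomial.eval_pow]
        rw [← factor_eq' k t]
      rw [Finset.prod_congr rfl e2, Finset.prod_mul_distrib, Finset.prod_mul_distrib]
      rw [Finset.prod_const, Nat.card_Icc]
      rw [← Complex.exp_sum]
      have e3 : ∑ k ∈ Icc 1 n, Complex.I * ((k:ℂ) * t) = Complex.I * S * t := by
        rw [hSdef]
        push_cast [Finset.sum_mul, Finset.mul_sum]
        ring_nf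
        exact Finset.sum_congr rfl fun x _ => by ring
      rw [e3]
      simp only [Nat.add_sub_cancel]
      ring
    have heval2 : Q.eval (Complex.exp (2*Complex.I*t))
        = ∑ j ∈ range d, ((P.coeff j : ℤ) : ℂ) * g j t * Complex.exp (Complex.I * S * t) := by
      rw [Polynomial.eval_eq_sum_range' hQdeg]
      refine Finset.sum_congr rfl fun j _ => ?_
      rw [hQcoeff, ← Complex.exp_nat_mul]
      have hA : Complex.exp ((j:ℂ) * (2 * (Complex.I * (t:ℂ))))
          = g j t * Complex.exp (Complex.I * S * t) := by
        simp only [hgdef, ← Complex.exp_add]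
        congr 1
        push_cast
        ring
      have harg : (j:ℂ) * (2 * Complex.I * (t:ℂ)) = (j:ℂ) * (2 * (Complex.I * (t:ℂ))) := by ring
      rw [harg, hA]
      ring
    have hexp_ne : Complex.exp (Complex.I * S * t) ≠ 0 := Complex.exp_ne_zero _
    have h2n : (2:ℂ)^n ≠ 0 := pow_ne_zero _ two_ne_zero
    rw [heval2, ← Finset.sum_mul] at heval
    have h' : (∑ j ∈ range d, ((P.coeff j : ℤ) : ℂ) * g j t) * Complex.exp (Complex.I * S * t)
        = ((2:ℂ)^n * ∏ k ∈ Icc 1 n, Complex.cos (k * t)) * Complex.exp (Complex.I * S * t) := by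
      linear_combination heval
    have hcancel := mul_right_cancel₀ hexp_ne h'
    rw [eq_div_iff h2n]
    linear_combination -hcancel
  -- compute the complex integral
  have hint : ∀ j ∈ range d, IntervalIntegrable (fun t => ((P.coeff j : ℤ) : ℂ) * g j t)
      MeasureTheory.volume 0 (2*π) := by
    intro j _
    apply Continuous.intervalIntegrable
    fun_prop
  have hJ : (∫ t in (0:ℝ)..(2*π), ∏ k ∈ Icc 1 n, Complex.cos (k * t))
      = 2 * π * ((P.coeff N : ℤ) : ℂ) / 2 ^ n := by
    rw [intervalIntegral.integral_congr (fun t _ => key t)]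
    rw [intervalIntegral.integral_div, intervalIntegral.integral_finset_sum hint]
    have hterm : ∀ j ∈ range d, (∫ t in (0:ℝ)..(2*π), ((P.coeff j : ℤ) : ℂ) * g j t)
        = if j = N then 2 * π * ((P.coeff N : ℤ) : ℂ) else 0 := by
      intro j hj
      rw [intervalIntegral.integral_const_mul]
      by_cases hjN : j = N
      · have hz : (2*(j:ℤ) - (S:ℤ)) = 0 := by omega
        have hgint : (∫ t in (0:ℝ)..(2*π), g j t) = ((2*π : ℝ) : ℂ) := by
          simp only [hgdef, hz]
          simp
        rw [hgint, if_pos hjN, hjN]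
        push_cast
        ring
      · have hz : (2*(j:ℤ) - (S:ℤ)) ≠ 0 := by omega
        simp only [if_neg hjN, hgdef]
        rw [int_exp_zero' _ hz, mul_zero]
    rw [Finset.sum_congr rfl hterm, Finset.sum_ite_eq' (range d) N]
    by_cases hN : N ∈ range d
    · rw [if_pos hN]
    · rw [if_neg hN]
      have : P.coeff N = 0 := by
        apply Polynomial.coeff_eq_zero_of_natDegree_lt
        simp only [Finset.mem_range, not_lt, hddef] at hN
        omega
      simp [this]
  -- relate to the real integral
  have hreal : ((∫ t in (0:ℝ)..(2*π), ∏ k ∈ Icc 1 n, Real.cos (k * t) : ℝ) : ℂ)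
      = ∫ t in (0:ℝ)..(2*π), ∏ k ∈ Icc 1 n, Complex.cos (k * t) := by
    rw [← intervalIntegral.integral_ofReal]
    refine intervalIntegral.integral_congr fun t _ => ?_
    push_cast
    rfl
  set R : ℝ := ∫ t in (0:ℝ)..(2*π), ∏ k ∈ Icc 1 n, Real.cos (k * t) with hRdef
  have hR : R = 2 * π * ((P.coeff N : ℤ) : ℝ) / 2 ^ n := by
    have := hreal.trans hJ
    exact_mod_cast this
  rw [hR]
  have hpow : (2:ℝ)^n = 2^(n-1) * 2 := by
    rw [← pow_succ, Nat.sub_add_cancel hn]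
  rw [hpow]
  have hπ : π ≠ 0 := Real.pi_ne_zero
  have h2 : (2:ℝ)^(n-1) ≠ 0 := by positivity
  field_simp
end

section
/- For any positive integer n and real t with sin(t) ≠ 0, the product f_n(t) = ∏_{k=1}^n cos(kt) satisfies |f_n(t)| ≤ (1/2 + 1/(2n·|sin(t)|))^(n/2). -/
open Real Finset

theorem stmt_2 (n : ℕ) (hn : 0 < n) (t : ℝ) (ht : Real.sin t ≠ 0) :
    |∏ k ∈ Finset.Icc 1 n, Real.cos (k * t)|
      ≤ (1 / 2 + 1 / (2 * n * |Real.sin t|)) ^ ((n : ℝ) / 2) := by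
  have hsabs : 0 < |Real.sin t| := abs_pos.mpr ht
  have hn' : (0:ℝ) < n := by exact_mod_cast hn
  set B : ℝ := 1 / 2 + 1 / (2 * n * |Real.sin t|) with hB
  have hB0 : 0 ≤ B := by positivity
  set S : ℝ := ∑ k ∈ Finset.Icc 1 n, Real.cos (k * t) ^ 2 with hS
  -- telescoping sum bound
  have htel : ∑ i ∈ Finset.range n, 2 * Real.sin t * Real.cos (2 * ((i:ℝ)+1) * t)
      = Real.sin ((2*n+1) * t) - Real.sin ((2*(0:ℝ)+1) * t) := by
    have h := Finset.sum_range_sub (fun i => Real.sin ((2*(i:ℝ)+1) * t)) n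
    push_cast at h
    rw [← h]
    apply Finset.sum_congr rfl
    intro i _
    rw [Real.sin_sub_sin]
    push_cast
    ring_nf
  have hsum_bound : |∑ i ∈ Finset.range n, Real.cos (2 * ((i:ℝ)+1) * t)| ≤ 1 / |Real.sin t| := by
    have h1 : |∑ i ∈ Finset.range n, 2 * Real.sin t * Real.cos (2 * ((i:ℝ)+1) * t)| ≤ 2 := by
      rw [htel]
      have := Real.neg_one_le_sin ((2*(n:ℝ)+1) * t)
      have := Real.sin_le_one ((2*(n:ℝ)+1) * t)
      have := Real.neg_one_le_sin ((2*(0:ℝ)+1) * t)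
      have := Real.sin_le_one ((2*(0:ℝ)+1) * t)
      rw [abs_le]; constructor <;> linarith
    rw [← Finset.mul_sum, abs_mul, abs_mul] at h1
    have h2 : |(2:ℝ)| = 2 := by norm_num
    rw [h2] at h1
    rw [le_div_iff₀ hsabs]
    nlinarith [hsabs]
  -- sum of cos^2 bound
  have hSb : S ≤ n / 2 + 1 / (2 * |Real.sin t|) := by
    have hrw : S = ∑ i ∈ Finset.range n,
        (1/2 + Real.cos (2 * ((i:ℝ)+1) * t) / 2) := by
      rw [hS, show Finset.Icc 1 n = Finset.Ico 1 (n+1) from by rw [Finset.Ico_add_one_right_eq_Icc],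
        Finset.sum_Ico_eq_sum_range]
      apply Finset.sum_congr (by simp)
      intro i _
      rw [Real.cos_sq]
      push_cast
      ring_nf
    rw [hrw, Finset.sum_add_distrib, Finset.sum_const, Finset.card_range]
    have h2 : ∑ i ∈ Finset.range n, Real.cos (2 * ((i:ℝ)+1) * t) / 2
        = (∑ i ∈ Finset.range n, Real.cos (2 * ((i:ℝ)+1) * t)) / 2 := by
      rw [Finset.sum_div]
    rw [h2, nsmul_eq_mul]
    have := abs_le.mp hsum_bound
    have : (∑ i ∈ Finset.range n, Real.cos (2 * ((i:ℝ)+1) * t)) ≤ 1 / |Real.sin t| := this.2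
    have hx : (1:ℝ)/|Real.sin t| / 2 = 1/(2*|Real.sin t|) := by ring
    linarith
  -- AM-GM
  have hz : ∀ k ∈ Finset.Icc 1 n, (0:ℝ) ≤ Real.cos (k * t) ^ 2 := fun k _ => sq_nonneg _
  have hamgm : ∏ k ∈ Finset.Icc 1 n, (Real.cos (k * t) ^ 2) ^ ((1:ℝ)/n)
      ≤ S / n := by
    have hw : ∀ k ∈ Finset.Icc 1 n, (0:ℝ) ≤ (1:ℝ)/n := fun k _ => by positivity
    have hw' : ∑ k ∈ Finset.Icc 1 n, (1:ℝ)/n = 1 := by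
      rw [Finset.sum_const, Nat.card_Icc]
      simp
      field_simp
    have := Real.geom_mean_le_arith_mean_weighted (Finset.Icc 1 n)
      (fun _ => (1:ℝ)/n) (fun k => Real.cos (k * t) ^ 2) hw hw' hz
    simpa [← Finset.mul_sum, hS, div_eq_inv_mul, mul_comm] using this
  have hprod : ∏ k ∈ Finset.Icc 1 n, Real.cos (k * t) ^ 2 ≤ (S / n) ^ n := by
    have h1 : (∏ k ∈ Finset.Icc 1 n, (Real.cos (k * t) ^ 2) ^ ((1:ℝ)/n)) ^ n
        ≤ (S / n) ^ n := by
      apply pow_le_pow_left₀ _ hamgm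
      exact Finset.prod_nonneg fun k hk => Real.rpow_nonneg (hz k hk) _
    calc ∏ k ∈ Finset.Icc 1 n, Real.cos (k * t) ^ 2
        = (∏ k ∈ Finset.Icc 1 n, (Real.cos (k * t) ^ 2) ^ ((1:ℝ)/n)) ^ n := by
          rw [← Finset.prod_pow]
          apply Finset.prod_congr rfl
          intro k hk
          rw [← Real.rpow_natCast ((Real.cos (k * t) ^ 2) ^ ((1:ℝ)/n)) n,
            ← Real.rpow_mul (hz k hk)]
          rw [one_div, inv_mul_cancel₀ (by positivity : (n:ℝ) ≠ 0), Real.rpow_one]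
      _ ≤ (S / n) ^ n := h1
  have hSn : S / n ≤ B := by
    rw [div_le_iff₀ hn', hB]
    have : (n:ℝ) / 2 + 1 / (2 * |Real.sin t|)
        = (1 / 2 + 1 / (2 * n * |Real.sin t|)) * n := by
      field_simp
    linarith [hSb]
  have hprodB : ∏ k ∈ Finset.Icc 1 n, Real.cos (k * t) ^ 2 ≤ B ^ n :=
    hprod.trans (pow_le_pow_left₀ (by positivity) hSn n)
  -- conclude
  have habs : |∏ k ∈ Finset.Icc 1 n, Real.cos (k * t)| ^ 2
      = ∏ k ∈ Finset.Icc 1 n, Real.cos (k * t) ^ 2 := by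
    rw [Finset.abs_prod, ← Finset.prod_pow]
    exact Finset.prod_congr rfl fun k _ => sq_abs _
  have hrpow : (B ^ ((n:ℝ)/2)) ^ 2 = B ^ n := by
    rw [← Real.rpow_natCast (B ^ ((n:ℝ)/2)) 2, ← Real.rpow_mul hB0]
    norm_num
  have hgoal : |∏ k ∈ Finset.Icc 1 n, Real.cos (k * t)| ^ 2
      ≤ (B ^ ((n:ℝ)/2)) ^ 2 := by rw [habs, hrpow]; exact hprodB
  exact (pow_le_pow_iff_left₀ (abs_nonneg _) (Real.rpow_nonneg hB0 _) two_ne_zero).mp hgoal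
end

section
/- Fix 0 < ε < 1/4 and let c = 1/6. Then for all sufficiently large n, with t = n^{-(3/2 - ε)}, the product ∏_{k=1}^n cos(kt) ≤ exp(-(c/2)·n^{2ε}). -/
open Real Finset

lemma sumsq_lb (n : ℕ) : (n : ℝ) ^ 3 / 3 ≤ ∑ k ∈ Finset.Icc 1 n, (k : ℝ) ^ 2 := by
  induction n with
  | zero => simp
  | succ n ih =>
    rw [Finset.sum_Icc_succ_top (by omega)]
    push_cast
    push_cast at ih
    nlinarith [ih, Nat.cast_nonneg (α := ℝ) n]

theorem stmt_9 (ε : ℝ) (hε0 : 0 < ε) (hε1 : ε < 1 / 4) :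
    ∃ N : ℕ, ∀ n : ℕ, N ≤ n →
      ∏ k ∈ Finset.Icc 1 n, Real.cos (k * (n : ℝ) ^ (-(3 / 2 - ε)))
        ≤ Real.exp (-(1 / 6 / 2) * (n : ℝ) ^ (2 * ε)) := by
  refine ⟨1, fun n hn => ?_⟩
  have hn1 : (1 : ℝ) ≤ (n : ℝ) := by exact_mod_cast hn
  have hn0 : (0 : ℝ) < (n : ℝ) := by linarith
  set t : ℝ := (n : ℝ) ^ (-(3 / 2 - ε)) with ht
  have ht0 : 0 < t := Real.rpow_pos_of_pos hn0 _
  -- bound on k*t for k ∈ Icc 1 n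
  have hkt : ∀ k ∈ Finset.Icc 1 n, 0 ≤ (k : ℝ) * t ∧ (k : ℝ) * t ≤ 1 := by
    intro k hk
    rw [Finset.mem_Icc] at hk
    have hk0 : (0 : ℝ) ≤ (k : ℝ) := Nat.cast_nonneg k
    refine ⟨mul_nonneg hk0 ht0.le, ?_⟩
    have hkn : (k : ℝ) ≤ (n : ℝ) := by exact_mod_cast hk.2
    have : (k : ℝ) * t ≤ (n : ℝ) * t := by
      exact mul_le_mul_of_nonneg_right hkn ht0.le
    refine this.trans ?_
    have : (n : ℝ) * t = (n : ℝ) ^ (1 + -(3 / 2 - ε)) := by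
      rw [Real.rpow_add hn0, Real.rpow_one]
    rw [this]
    apply Real.rpow_le_one_of_one_le_of_nonpos hn1
    linarith
  -- pointwise bound cos x ≤ exp (-(x^2/2) + x^4 * (5/96))
  have hpt : ∀ k ∈ Finset.Icc 1 n, Real.cos ((k : ℝ) * t)
      ≤ Real.exp (-(((k : ℝ) * t) ^ 2 / 2) + ((k : ℝ) * t) ^ 4 * (5 / 96)) := by
    intro k hk
    obtain ⟨h0, h1⟩ := hkt k hk
    have habs : |(k : ℝ) * t| ≤ 1 := by rw [abs_of_nonneg h0]; exact h1
    have hb := Real.cos_bound habs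
    rw [abs_sub_le_iff] at hb
    have : Real.cos ((k : ℝ) * t) ≤ 1 + (-(((k : ℝ) * t) ^ 2 / 2) + ((k : ℝ) * t) ^ 4 * (5 / 96)) := by
      have h2 := hb.1
      rw [abs_of_nonneg h0] at h2
      nlinarith [h2]
    exact this.trans (Real.add_one_le_exp _ |>.trans_eq' (by ring_nf))
  have hcos0 : ∀ k ∈ Finset.Icc 1 n, 0 ≤ Real.cos ((k : ℝ) * t) := by
    intro k hk
    obtain ⟨h0, h1⟩ := hkt k hk
    apply Real.cos_nonneg_of_mem_Icc
    constructor
    · linarith [Real.pi_gt_three]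
    · linarith [Real.pi_gt_three]
  calc ∏ k ∈ Finset.Icc 1 n, Real.cos ((k : ℝ) * t)
      ≤ ∏ k ∈ Finset.Icc 1 n, Real.exp (-(((k : ℝ) * t) ^ 2 / 2) + ((k : ℝ) * t) ^ 4 * (5 / 96)) :=
        Finset.prod_le_prod hcos0 hpt
    _ = Real.exp (∑ k ∈ Finset.Icc 1 n, (-(((k : ℝ) * t) ^ 2 / 2) + ((k : ℝ) * t) ^ 4 * (5 / 96))) :=
        (Real.exp_sum _ _).symm
    _ ≤ Real.exp (-(1 / 6 / 2) * (n : ℝ) ^ (2 * ε)) := by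
        apply Real.exp_le_exp.2
        have hsum : ∑ k ∈ Finset.Icc 1 n, (-(((k : ℝ) * t) ^ 2 / 2) + ((k : ℝ) * t) ^ 4 * (5 / 96))
            = -(t ^ 2 / 2) * (∑ k ∈ Finset.Icc 1 n, (k : ℝ) ^ 2)
              + (t ^ 4 * (5 / 96)) * (∑ k ∈ Finset.Icc 1 n, (k : ℝ) ^ 4) := by
          rw [Finset.mul_sum, Finset.mul_sum, ← Finset.sum_add_distrib]
          exact Finset.sum_congr rfl (fun k _ => by ring)
        rw [hsum]
        have hS2 := sumsq_lb n
        have hS4 : ∑ k ∈ Finset.Icc 1 n, (k : ℝ) ^ 4 ≤ (n : ℝ) ^ 5 := by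
          calc ∑ k ∈ Finset.Icc 1 n, (k : ℝ) ^ 4 ≤ ∑ k ∈ Finset.Icc 1 n, (n : ℝ) ^ 4 := by
                apply Finset.sum_le_sum
                intro k hk
                rw [Finset.mem_Icc] at hk
                have : (k : ℝ) ≤ (n : ℝ) := by exact_mod_cast hk.2
                exact pow_le_pow_left₀ (Nat.cast_nonneg k) this 4
            _ = (n : ℝ) * (n : ℝ) ^ 4 := by
                rw [Finset.sum_const, Nat.card_Icc]; simp [nsmul_eq_mul]
            _ = (n : ℝ) ^ 5 := by ring
        -- key rpow identities
        have ht2 : t ^ 2 * (n : ℝ) ^ 3 = (n : ℝ) ^ (2 * ε) := by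
          rw [ht, ← Real.rpow_natCast ((n:ℝ) ^ (-(3/2-ε))) 2, ← Real.rpow_natCast (n:ℝ) 3,
            ← Real.rpow_mul hn0.le, ← Real.rpow_add hn0]
          norm_num
          ring_nf
        have ht4 : t ^ 4 * (n : ℝ) ^ 5 ≤ 1 := by
          have : t ^ 4 * (n : ℝ) ^ 5 = (n : ℝ) ^ (4 * ε - 1) := by
            rw [ht, ← Real.rpow_natCast ((n:ℝ) ^ (-(3/2-ε))) 4, ← Real.rpow_natCast (n:ℝ) 5,
              ← Real.rpow_mul hn0.le, ← Real.rpow_add hn0]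
            norm_num
            ring_nf
          rw [this]
          exact Real.rpow_le_one_of_one_le_of_nonpos hn1 (by linarith)
        have hge1 : (1 : ℝ) ≤ (n : ℝ) ^ (2 * ε) :=
          Real.one_le_rpow hn1 (by linarith)
        have h1 : -(t ^ 2 / 2) * (∑ k ∈ Finset.Icc 1 n, (k : ℝ) ^ 2)
            ≤ -(t ^ 2 / 2) * ((n : ℝ) ^ 3 / 3) := by
          apply mul_le_mul_of_nonpos_left hS2 (neg_nonpos.2 (by positivity))
        have h2 : (t ^ 4 * (5 / 96)) * (∑ k ∈ Finset.Icc 1 n, (k : ℝ) ^ 4)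
            ≤ (t ^ 4 * (5 / 96)) * (n : ℝ) ^ 5 := by
          apply mul_le_mul_of_nonneg_left hS4 (by positivity)
        nlinarith [ht2, ht4, hge1, h1, h2]
end

section
/- Fix 0 < ε < 1/4. Then n^{3/2} · ∫_{n^{-(3/2-ε)} ≤ |t| ≤ π/2} |∏_{k=1}^n cos(kt)| dt → 0 as n → ∞. -/
open Real Finset Filter MeasureTheory

lemma abs_cos_le (x : ℝ) : |Real.cos x| ≤ Real.exp (-(Real.sin x ^ 2) / 2) := by
  have h1 : Real.cos x ^ 2 ≤ Real.exp (-(Real.sin x ^ 2)) := by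
    have := Real.add_one_le_exp (-(Real.sin x ^ 2))
    nlinarith [Real.sin_sq_add_cos_sq x]
  have h2 : |Real.cos x| ^ 2 ≤ Real.exp (-(Real.sin x ^ 2) / 2) ^ 2 := by
    have e : Real.exp (-(Real.sin x ^ 2) / 2) ^ 2 = Real.exp (-(Real.sin x ^ 2)) := by
      rw [← Real.exp_nat_mul]; push_cast; ring_nf
    rw [sq_abs, e]; exact h1
  nlinarith [abs_nonneg (Real.cos x), Real.exp_pos (-(Real.sin x ^ 2) / 2)]

-- L2
lemma prod_abs_cos_le (n : ℕ) (t : ℝ) :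
    |∏ k ∈ Finset.Icc 1 n, Real.cos (k * t)| ≤
      Real.exp (-(∑ k ∈ Finset.Icc 1 n, Real.sin (k * t) ^ 2) / 2) := by
  rw [Finset.abs_prod]
  calc ∏ k ∈ Finset.Icc 1 n, |Real.cos (k * t)|
      ≤ ∏ k ∈ Finset.Icc 1 n, Real.exp (-(Real.sin (k * t) ^ 2) / 2) :=
        Finset.prod_le_prod (fun k _ => abs_nonneg _) (fun k _ => abs_cos_le _)
    _ = Real.exp (∑ k ∈ Finset.Icc 1 n, (-(Real.sin (k * t) ^ 2) / 2)) := by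
        rw [Real.exp_sum]
    _ = _ := by rw [← Finset.sum_div, ← Finset.sum_neg_distrib]


lemma sum_cos_telescope (n : ℕ) (s : ℝ) :
    2 * Real.sin s * ∑ k ∈ Finset.Icc 1 n, Real.cos (2 * k * s)
      = Real.sin ((2 * n + 1) * s) - Real.sin s := by
  induction n with
  | zero => simp
  | succ n ih =>
    rw [Finset.sum_Icc_succ_top (by omega : 1 ≤ n + 1), mul_add, ih]
    have e1 : ((2 * ((n:ℝ) + 1) + 1) * s) = (2 * ((n:ℝ)+1) * s) + s := by ring
    have e2 : ((2 * (n:ℝ) + 1) * s) = (2 * ((n:ℝ)+1) * s) - s := by ring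
    push_cast
    rw [e1, e2, Real.sin_add, Real.sin_sub]
    ring

lemma abs_sum_cos_le (n : ℕ) {s : ℝ} (hs : 0 < Real.sin s) :
    |∑ k ∈ Finset.Icc 1 n, Real.cos (2 * k * s)| ≤ 1 / Real.sin s := by
  have h := sum_cos_telescope n s
  have h2 : |2 * Real.sin s * ∑ k ∈ Finset.Icc 1 n, Real.cos (2 * k * s)| ≤ 2 := by
    rw [h]
    have a1 := Real.abs_sin_le_one ((2 * (n:ℝ) + 1) * s)
    have a2 := Real.abs_sin_le_one s
    calc |Real.sin ((2*(n:ℝ)+1)*s) - Real.sin s| ≤ |Real.sin ((2*(n:ℝ)+1)*s)| + |Real.sin s| :=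
          abs_sub _ _
      _ ≤ 2 := by linarith
  rw [abs_mul, abs_of_pos (by linarith : (0:ℝ) < 2 * Real.sin s)] at h2
  rw [le_div_iff₀ hs]
  nlinarith [abs_nonneg (∑ k ∈ Finset.Icc 1 n, Real.cos (2 * k * s))]

lemma sin_sq_sum (n : ℕ) (s : ℝ) :
    ∑ k ∈ Finset.Icc 1 n, Real.sin (k * s) ^ 2
      = n / 2 - (∑ k ∈ Finset.Icc 1 n, Real.cos (2 * k * s)) / 2 := by
  have e : ∀ k : ℕ, k ∈ Finset.Icc 1 n → Real.sin (k * s) ^ 2 = 1 / 2 - Real.cos (2 * k * s) / 2 := by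
    intro k _
    rw [Real.sin_sq_eq_half_sub, mul_assoc]
  rw [Finset.sum_congr rfl e, Finset.sum_sub_distrib, Finset.sum_const, Nat.card_Icc,
    Nat.add_sub_cancel, Finset.sum_div]
  simp [nsmul_eq_mul]
  ring

lemma sum_sq_lower (m : ℕ) : ((m:ℝ))^3/3 ≤ ∑ k ∈ Finset.Icc 1 m, (k:ℝ)^2 := by
  induction m with
  | zero => simp
  | succ m ih =>
    rw [Finset.sum_Icc_succ_top (by omega : 1 ≤ m + 1)]
    push_cast
    nlinarith [ih, (Nat.cast_nonneg m : (0:ℝ) ≤ m)]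

lemma lower_small {n : ℕ} {s : ℝ} (hn : 3 ≤ n) (hs0 : 0 ≤ s) (hsn : s ≤ π / n) :
    4 / (3 * π ^ 2) * (s ^ 2 * (n:ℝ) ^ 3 / 27) ≤
      ∑ k ∈ Finset.Icc 1 n, Real.sin (k * s) ^ 2 := by
  set m := n / 2 with hm
  have hπ := Real.pi_pos
  have hn0 : (0:ℝ) < n := by positivity
  have hmn : (m:ℝ) ≤ (n:ℝ) / 2 := by
    rw [hm]; exact_mod_cast Nat.cast_div_le
  have hm3 : (n:ℝ) / 3 ≤ (m:ℝ) := by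
    have h1 : n ≤ 2 * m + 1 := by omega
    have h2 : (n:ℝ) ≤ 2 * m + 1 := by exact_mod_cast h1
    have h3 : (3:ℝ) ≤ n := by exact_mod_cast hn
    linarith
  have key : ∀ k ∈ Finset.Icc 1 m, (2 / π * (k * s)) ^ 2 ≤ Real.sin (k * s) ^ 2 := by
    intro k hk
    simp only [Finset.mem_Icc] at hk
    have hks0 : 0 ≤ (k:ℝ) * s := by positivity
    have hks : (k:ℝ) * s ≤ π / 2 := by
      have hkm : (k:ℝ) ≤ m := by exact_mod_cast hk.2
      calc (k:ℝ) * s ≤ (n:ℝ)/2 * s := by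
            apply mul_le_mul_of_nonneg_right _ hs0
            linarith
        _ ≤ (n:ℝ)/2 * (π / n) := by
            apply mul_le_mul_of_nonneg_left hsn; positivity
        _ = π / 2 := by field_simp
    have h := Real.mul_le_sin hks0 hks
    have ha : (0:ℝ) ≤ 2 / π * ((k:ℝ) * s) := by positivity
    nlinarith [h, ha]
  have sub : ∑ k ∈ Finset.Icc 1 m, Real.sin (k * s) ^ 2 ≤
      ∑ k ∈ Finset.Icc 1 n, Real.sin (k * s) ^ 2 := by
    apply Finset.sum_le_sum_of_subset_of_nonneg
    · apply Finset.Icc_subset_Icc_right; omega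
    · intro k _ _; positivity
  have step : 4 / π ^ 2 * s ^ 2 * ((m:ℝ)^3/3) ≤ ∑ k ∈ Finset.Icc 1 m, Real.sin (k * s) ^ 2 := by
    calc 4 / π ^ 2 * s ^ 2 * ((m:ℝ)^3/3)
        ≤ 4 / π ^ 2 * s ^ 2 * ∑ k ∈ Finset.Icc 1 m, (k:ℝ)^2 := by
          apply mul_le_mul_of_nonneg_left (sum_sq_lower m); positivity
      _ = ∑ k ∈ Finset.Icc 1 m, (2 / π * (k * s)) ^ 2 := by
          rw [Finset.mul_sum]; apply Finset.sum_congr rfl; intro k _; field_simp; ring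
      _ ≤ ∑ k ∈ Finset.Icc 1 m, Real.sin (k * s) ^ 2 := Finset.sum_le_sum key
  refine le_trans ?_ (step.trans sub)
  have : ((n:ℝ)/3)^3 ≤ (m:ℝ)^3 := by
    apply pow_le_pow_left₀ (by positivity) hm3
  calc 4 / (3 * π ^ 2) * (s ^ 2 * (n:ℝ) ^ 3 / 27) = 4 / π ^ 2 * s^2 * (((n:ℝ)/3)^3/3) := by
        field_simp; ring
    _ ≤ 4 / π ^ 2 * s ^ 2 * ((m:ℝ)^3/3) := by
        apply mul_le_mul_of_nonneg_left _ (by positivity)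
        linarith

lemma lower_large {n : ℕ} {s : ℝ} (hn : 1 ≤ n) (hs1 : π / n ≤ s) (hs2 : s ≤ π / 2) :
    (n:ℝ) / 4 ≤ ∑ k ∈ Finset.Icc 1 n, Real.sin (k * s) ^ 2 := by
  have hπ := Real.pi_pos
  have hn0 : (0:ℝ) < n := by exact_mod_cast hn
  have hs0 : 0 < s := lt_of_lt_of_le (by positivity) hs1
  have hsin : 0 < Real.sin s := Real.sin_pos_of_pos_of_lt_pi hs0 (by linarith)
  have hsinlb : 2 / (n:ℝ) ≤ Real.sin s := by
    have := Real.mul_le_sin (le_of_lt hs0) hs2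
    have h2 : 2 / π * (π / n) ≤ 2 / π * s := by
      apply mul_le_mul_of_nonneg_left hs1; positivity
    have h3 : 2 / π * (π / (n:ℝ)) = 2 / n := by field_simp
    linarith
  have habs := abs_sum_cos_le n hsin
  have hinv : 1 / Real.sin s ≤ (n:ℝ) / 2 := by
    rw [div_le_div_iff₀ hsin (by norm_num : (0:ℝ) < 2)]
    calc (1:ℝ) * 2 = 2 := by ring
      _ = (n:ℝ) * (2 / n) := by field_simp
      _ ≤ (n:ℝ) * Real.sin s := by apply mul_le_mul_of_nonneg_left hsinlb (le_of_lt hn0)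
  rw [sin_sq_sum]
  have := (abs_le.mp habs).2
  linarith

lemma pointwise_bound (ε : ℝ) (hε0 : 0 < ε) {n : ℕ} (hn : 3 ≤ n) {t : ℝ}
    (h1 : (n : ℝ) ^ (-(3 / 2 - ε)) ≤ |t|) (h2 : |t| ≤ π / 2) :
    |∏ k ∈ Finset.Icc 1 n, Real.cos (k * t)| ≤
      Real.exp (-(2 / (81 * π ^ 2)) * (n:ℝ) ^ (2 * ε)) + Real.exp (-(n:ℝ) / 8) := by
  have hπ := Real.pi_pos
  have hn0 : (0:ℝ) < n := by exact_mod_cast (by omega : 0 < n)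
  have habs : |∏ k ∈ Finset.Icc 1 n, Real.cos (k * t)|
      = |∏ k ∈ Finset.Icc 1 n, Real.cos (k * |t|)| := by
    congr 1
    apply Finset.prod_congr rfl
    intro k _
    rcases abs_choice t with h | h
    · rw [h]
    · rw [h, mul_neg, Real.cos_neg]
  rw [habs]
  rcases le_or_gt (|t|) (π / n) with hc | hc
  · -- small case
    have hlow := lower_small hn (abs_nonneg t) hc
    have hsq : (n:ℝ) ^ (2 * ε) ≤ |t| ^ 2 * (n:ℝ) ^ 3 := by
      have hd0 : (0:ℝ) < (n:ℝ) ^ (-(3 / 2 - ε)) := Real.rpow_pos_of_pos hn0 _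
      have e1 : ((n:ℝ) ^ (-(3 / 2 - ε))) ^ 2 = (n:ℝ) ^ (-(3 - 2 * ε)) := by
        rw [← Real.rpow_natCast ((n:ℝ) ^ (-(3 / 2 - ε))) 2, ← Real.rpow_mul (le_of_lt hn0)]
        norm_num
        ring_nf
      have e2 : (n:ℝ) ^ (-(3 - 2 * ε)) * (n:ℝ) ^ (3:ℕ) = (n:ℝ) ^ (2 * ε) := by
        rw [← Real.rpow_natCast (n:ℝ) 3, ← Real.rpow_add hn0]
        norm_num
      have h3 : ((n:ℝ) ^ (-(3 / 2 - ε))) ^ 2 ≤ |t| ^ 2 :=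
        pow_le_pow_left₀ (le_of_lt hd0) h1 2
      calc (n:ℝ) ^ (2 * ε) = (n:ℝ) ^ (-(3 - 2 * ε)) * (n:ℝ) ^ (3:ℕ) := e2.symm
        _ = ((n:ℝ) ^ (-(3 / 2 - ε))) ^ 2 * (n:ℝ) ^ 3 := by rw [e1]
        _ ≤ |t| ^ 2 * (n:ℝ) ^ 3 := by
            apply mul_le_mul_of_nonneg_right h3 (by positivity)
    have hS : (2 / (81 * π ^ 2)) * (n:ℝ) ^ (2 * ε)
        ≤ (∑ k ∈ Finset.Icc 1 n, Real.sin (k * |t|) ^ 2) / 2 := by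
      have : 4 / (3 * π ^ 2) * ((n:ℝ) ^ (2*ε) / 27)
          ≤ 4 / (3 * π ^ 2) * (|t| ^ 2 * (n:ℝ) ^ 3 / 27) := by
        apply mul_le_mul_of_nonneg_left _ (by positivity)
        linarith
      have := this.trans hlow
      have e : 2 / (81 * π ^ 2) * (n:ℝ) ^ (2 * ε)
          = 4 / (3 * π ^ 2) * ((n:ℝ) ^ (2*ε) / 27) / 2 := by ring
      rw [e]
      linarith
    calc |∏ k ∈ Finset.Icc 1 n, Real.cos (k * |t|)|
        ≤ Real.exp (-(∑ k ∈ Finset.Icc 1 n, Real.sin (k * |t|) ^ 2) / 2) :=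
          prod_abs_cos_le n |t|
      _ ≤ Real.exp (-(2 / (81 * π ^ 2)) * (n:ℝ) ^ (2 * ε)) := by
          apply Real.exp_le_exp.mpr
          rw [neg_div, neg_mul]
          exact neg_le_neg hS
      _ ≤ _ := le_add_of_nonneg_right (le_of_lt (Real.exp_pos _))
  · -- large case
    have hlow := lower_large (by omega : 1 ≤ n) (le_of_lt hc) h2
    calc |∏ k ∈ Finset.Icc 1 n, Real.cos (k * |t|)|
        ≤ Real.exp (-(∑ k ∈ Finset.Icc 1 n, Real.sin (k * |t|) ^ 2) / 2) :=
          prod_abs_cos_le n |t|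
      _ ≤ Real.exp (-(n:ℝ) / 8) := by
          apply Real.exp_le_exp.mpr
          rw [neg_div, neg_div]
          apply neg_le_neg
          linarith
      _ ≤ _ := le_add_of_nonneg_left (le_of_lt (Real.exp_pos _))
lemma tendsto_aux (c a : ℝ) (hc : 0 < c) (ha : 0 < a) :
    Tendsto (fun n : ℕ => (n:ℝ) ^ ((3:ℝ)/2) * Real.exp (-c * (n:ℝ) ^ a)) atTop (nhds 0) := by
  have h1 : Tendsto (fun y : ℝ => y ^ ((3:ℝ)/(2*a)) * Real.exp (-c * y)) atTop (nhds 0) :=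
    tendsto_rpow_mul_exp_neg_mul_atTop_nhds_zero _ c hc
  have h2 : Tendsto (fun x : ℝ => x ^ a) atTop atTop := tendsto_rpow_atTop ha
  have h3 : Tendsto (fun x : ℝ => (x ^ a) ^ ((3:ℝ)/(2*a)) * Real.exp (-c * x ^ a)) atTop (nhds 0) :=
    h1.comp h2
  have h4 : Tendsto (fun x : ℝ => x ^ ((3:ℝ)/2) * Real.exp (-c * x ^ a)) atTop (nhds 0) := by
    apply h3.congr'
    filter_upwards [eventually_ge_atTop (0:ℝ)] with x hx
    rw [← Real.rpow_mul hx]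
    congr 2
    field_simp
  exact h4.comp tendsto_natCast_atTop_atTop
theorem stmt_10 (ε : ℝ) (hε0 : 0 < ε) (hε1 : ε < 1 / 4) :
    Tendsto (fun n : ℕ =>
        (n : ℝ) ^ ((3 : ℝ) / 2) *
          ∫ t in {t : ℝ | (n : ℝ) ^ (-(3 / 2 - ε)) ≤ |t| ∧ |t| ≤ π / 2},
            |∏ k ∈ Finset.Icc 1 n, Real.cos (k * t)|)
      atTop (nhds 0) := by
  have hπ := Real.pi_pos
  set c : ℝ := 2 / (81 * π ^ 2) with hc
  have hc0 : 0 < c := by positivity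
  set g : ℕ → ℝ := fun n =>
    (n:ℝ) ^ ((3:ℝ)/2) * ((Real.exp (-c * (n:ℝ) ^ (2*ε)) + Real.exp (-(n:ℝ)/8)) * π) with hg
  have hgt : Tendsto g atTop (nhds 0) := by
    have T1 := (tendsto_aux c (2*ε) hc0 (by linarith)).mul_const π
    have T2 := (tendsto_aux (1/8) 1 (by norm_num) one_pos).mul_const π
    have := T1.add T2
    norm_num at this
    apply this.congr
    intro n
    rw [hg]
    simp only [Real.rpow_one]
    ring_nf
  apply tendsto_of_tendsto_of_tendsto_of_le_of_le' tendsto_const_nhds hgt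
  · filter_upwards with n
    apply mul_nonneg (Real.rpow_nonneg (Nat.cast_nonneg n) _)
    exact integral_nonneg (fun t => abs_nonneg _)
  · filter_upwards [eventually_ge_atTop 3] with n hn
    set S := {t : ℝ | (n : ℝ) ^ (-(3 / 2 - ε)) ≤ |t| ∧ |t| ≤ π / 2} with hS
    set C : ℝ := Real.exp (-c * (n:ℝ) ^ (2*ε)) + Real.exp (-(n:ℝ)/8) with hC
    have hC0 : 0 ≤ C := by positivity
    have hSsub : S ⊆ Set.Icc (-(π/2)) (π/2) := by
      intro t ht
      obtain ⟨h1, h2⟩ := abs_le.mp ht.2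
      exact ⟨h1, h2⟩
    have hSm : volume S < ⊤ :=
      lt_of_le_of_lt (measure_mono hSsub) (by rw [Real.volume_Icc]; exact ENNReal.ofReal_lt_top)
    have hcont : Continuous (fun t : ℝ => |∏ k ∈ Finset.Icc 1 n, Real.cos (k * t)|) := by
      apply Continuous.abs
      apply continuous_finset_prod
      intro k _
      exact Real.continuous_cos.comp (continuous_const.mul continuous_id)
    have hbound : ∀ t ∈ S, ‖|∏ k ∈ Finset.Icc 1 n, Real.cos (k * t)|‖ ≤ C := by
      intro t ht
      rw [Real.norm_eq_abs, abs_abs]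
      have hb := pointwise_bound ε hε0 hn ht.1 ht.2
      calc |∏ k ∈ Finset.Icc 1 n, Real.cos (k * t)|
          ≤ Real.exp (-(2 / (81 * π ^ 2)) * (n:ℝ) ^ (2 * ε)) + Real.exp (-(n:ℝ) / 8) := hb
        _ = C := by rw [hC, hc]
    have hnorm := norm_setIntegral_le_of_norm_le_const hSm hbound
    have htoReal : (volume S).toReal ≤ π := by
      apply ENNReal.toReal_le_of_le_ofReal (le_of_lt hπ)
      have h1 : volume S ≤ volume (Set.Icc (-(π/2)) (π/2)) := measure_mono hSsub
      rwa [Real.volume_Icc, (by ring : π/2 - (-(π/2)) = π)] at h1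
    have hint : (∫ t in S, |∏ k ∈ Finset.Icc 1 n, Real.cos (k * t)|) ≤ C * π := by
      calc (∫ t in S, |∏ k ∈ Finset.Icc 1 n, Real.cos (k * t)|)
          ≤ ‖∫ t in S, |∏ k ∈ Finset.Icc 1 n, Real.cos (k * t)|‖ := le_abs_self _
        _ ≤ C * (volume S).toReal := hnorm
        _ ≤ C * π := mul_le_mul_of_nonneg_left htoReal hC0
    calc (n : ℝ) ^ ((3 : ℝ) / 2) * ∫ t in S, |∏ k ∈ Finset.Icc 1 n, Real.cos (k * t)|
        ≤ (n : ℝ) ^ ((3 : ℝ) / 2) * (C * π) :=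
          mul_le_mul_of_nonneg_left hint (Real.rpow_nonneg (Nat.cast_nonneg n) _)
      _ = g n := by rw [hg]
end

section
/- Fix 0 < ε < 1/6. Then uniformly for |t| ≤ n^{-(3/2-ε)}, ∏_{k=1}^n cos(kt) = e^{-t² n(n+1)(2n+1)/12} · (1 + o(1)) as n → ∞; more precisely, |log ∏_{k=1}^n cos(kt) + t² n(n+1)(2n+1)/12| ≤ a·n^{-(9/2-3ε)}·n²(n+1)²/4 for some absolute constant a and all sufficiently large n. -/
open Real Finset

lemma sum_sq_Icc (n : ℕ) : ∑ k ∈ Finset.Icc 1 n, (k:ℝ)^2 = n*(n+1)*(2*n+1)/6 := by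
  induction n with
  | zero => simp
  | succ m ih =>
    rw [Finset.sum_Icc_succ_top (by omega), ih]
    push_cast; ring

lemma sum_cube_Icc (n : ℕ) : ∑ k ∈ Finset.Icc 1 n, (k:ℝ)^3 = (n:ℝ)^2*(n+1)^2/4 := by
  induction n with
  | zero => simp
  | succ m ih =>
    rw [Finset.sum_Icc_succ_top (by omega), ih]
    push_cast; ring

lemma logcos_bound (x : ℝ) (hx : |x| ≤ 1/2) :
    0 < Real.cos x ∧ |Real.log (Real.cos x) + x^2/2| ≤ 2 * |x|^3 := by
  have hx1 : |x| ≤ 1 := by linarith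
  have hsq : x^2 ≤ 1/4 := by
    nlinarith [sq_abs x, abs_nonneg x]
  have hlow : 1 - x^2/2 ≤ Real.cos x := Real.one_sub_sq_div_two_le_cos
  have hb := Real.cos_bound hx1
  have hcos_pos : 0 < Real.cos x := by nlinarith
  refine ⟨hcos_pos, ?_⟩
  have hx4 : |x|^4 = (x^2)^2 := by
    rw [show (4:ℕ) = 2*2 from rfl, pow_mul, sq_abs]
  -- upper bound
  have hup : Real.log (Real.cos x) + x^2/2 ≤ 2 * |x|^3 := by
    have h1 : Real.log (Real.cos x) ≤ Real.cos x - 1 :=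
      Real.log_le_sub_one_of_pos hcos_pos
    have h2 : Real.cos x ≤ 1 - x^2/2 + |x|^4 * (5/96) := by
      have := abs_le.mp hb
      linarith [this.2]
    have h3 : |x|^4 ≤ |x|^3 := by
      calc |x|^4 = |x|^3 * |x| := by ring
      _ ≤ |x|^3 * 1 := by
          exact mul_le_mul_of_nonneg_left hx1 (by positivity)
      _ = |x|^3 := by ring
    nlinarith [abs_nonneg x]
  -- lower bound
  have hlo : -(2 * |x|^3) ≤ Real.log (Real.cos x) + x^2/2 := by
    set u : ℝ := x^2/2 with hu
    have hu0 : 0 ≤ u := by positivity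
    have hu4 : u ≤ 1/8 := by simp [hu]; linarith
    have h1u : (0:ℝ) < 1 - u := by linarith
    have hmono : Real.log (1 - u) ≤ Real.log (Real.cos x) :=
      Real.log_le_log h1u hlow
    -- log(1-u) ≥ -u - (4/3) u^2
    have hinv : Real.log (1 - u)⁻¹ ≤ (1 - u)⁻¹ - 1 :=
      Real.log_le_sub_one_of_pos (by positivity)
    have hloglb : -(u + (4/3) * u^2) ≤ Real.log (1 - u) := by
      rw [Real.log_inv] at hinv
      have hkey : (1 - u)⁻¹ - 1 = u / (1 - u) := by
        field_simp; ring
      have hfrac : u / (1 - u) ≤ u + (4/3) * u^2 := by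
        rw [div_le_iff₀ h1u]
        nlinarith
      linarith
    have hcube : u^2 ≤ |x|^3 / 4 := by
      have : u^2 = x^2 * x^2 / 4 := by simp [hu]; ring
      rw [this]
      have h1 : x^2 * x^2 = |x|^3 * |x| := by
        rw [← sq_abs]; ring
      rw [h1]
      have : |x|^3 * |x| ≤ |x|^3 * 1 :=
        mul_le_mul_of_nonneg_left hx1 (by positivity)
      linarith
    have : -(u + (4/3) * u^2) + x^2/2 ≥ -(2 * |x|^3) := by
      simp only [hu]
      nlinarith [abs_nonneg x]
    linarith
  rw [abs_le]
  exact ⟨by linarith, hup⟩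

theorem stmt_15 (ε : ℝ) (hε0 : 0 < ε) (hε1 : ε < 1 / 6) :
    ∃ a : ℝ, 0 < a ∧ ∃ N : ℕ, ∀ n : ℕ, N ≤ n → ∀ t : ℝ, |t| ≤ (n : ℝ) ^ (-(3 / 2 - ε)) →
      |Real.log (∏ k ∈ Finset.Icc 1 n, Real.cos (k * t))
          + t ^ 2 * n * (n + 1) * (2 * n + 1) / 12|
        ≤ a * (n : ℝ) ^ (-(9 / 2 - 3 * ε)) * n ^ 2 * (n + 1) ^ 2 / 4 := by
  refine ⟨2, by norm_num, 8, ?_⟩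
  intro n hn t ht
  have hn1 : (1:ℝ) ≤ n := by exact_mod_cast (by omega : 1 ≤ n)
  have hnpos : (0:ℝ) < n := by linarith
  have hn8 : (8:ℝ) ≤ n := by exact_mod_cast hn
  -- each |k t| ≤ 1/2
  have hsmall : ∀ k ∈ Finset.Icc 1 n, |(k:ℝ) * t| ≤ 1/2 := by
    intro k hk
    have hk2 := Finset.mem_Icc.mp hk
    have hkn : (k:ℝ) ≤ n := by exact_mod_cast hk2.2
    have h1 : |(k:ℝ) * t| = (k:ℝ) * |t| := by
      rw [abs_mul, Nat.abs_cast]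
    rw [h1]
    have h2 : (k:ℝ) * |t| ≤ (n:ℝ) * (n:ℝ) ^ (-(3/2 - ε)) :=
      mul_le_mul hkn ht (abs_nonneg t) (le_of_lt hnpos)
    have h3 : (n:ℝ) * (n:ℝ) ^ (-(3/2 - ε)) = (n:ℝ) ^ (ε - 1/2) := by
      nth_rewrite 1 [← Real.rpow_one (n:ℝ)]
      rw [← Real.rpow_add hnpos]
      ring_nf
    have h4 : (n:ℝ) ^ (ε - 1/2) ≤ (n:ℝ) ^ (-(1/3) : ℝ) :=
      Real.rpow_le_rpow_of_exponent_le hn1 (by linarith)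
    have h5 : (n:ℝ) ^ (-(1/3) : ℝ) ≤ 1/2 := by
      have h8 : (8:ℝ) ^ ((1/3):ℝ) = 2 := by
        have : (8:ℝ) = 2 ^ (3:ℝ) := by norm_num [Real.rpow_natCast]
        rw [this, ← Real.rpow_mul (by norm_num)]
        norm_num
      have h6 : (2:ℝ) ≤ (n:ℝ) ^ ((1/3):ℝ) := by
        rw [← h8]
        exact Real.rpow_le_rpow (by norm_num) hn8 (by norm_num)
      rw [Real.rpow_neg (le_of_lt hnpos)]
      rw [inv_le_comm₀ (by positivity) (by norm_num)]
      linarith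
    linarith
  have hbnd := fun (k : ℕ) hk => logcos_bound ((k:ℝ) * t) (hsmall k hk)
  have hne : ∀ k ∈ Finset.Icc 1 n, Real.cos ((k:ℝ) * t) ≠ 0 :=
    fun k hk => ne_of_gt (hbnd k hk).1
  rw [Real.log_prod hne]
  -- rewrite the main quantity as a sum
  have hsum_sq : t^2 * n * (n+1) * (2*n+1) / 12 = ∑ k ∈ Finset.Icc 1 n, ((k:ℝ)*t)^2/2 := by
    have : ∑ k ∈ Finset.Icc 1 n, ((k:ℝ)*t)^2/2 = (t^2/2) * ∑ k ∈ Finset.Icc 1 n, (k:ℝ)^2 := by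
      rw [Finset.mul_sum]
      apply Finset.sum_congr rfl
      intro k _; ring
    rw [this, sum_sq_Icc]; ring
  rw [hsum_sq, ← Finset.sum_add_distrib]
  calc |∑ k ∈ Finset.Icc 1 n, (Real.log (Real.cos ((k:ℝ)*t)) + ((k:ℝ)*t)^2/2)|
      ≤ ∑ k ∈ Finset.Icc 1 n, |Real.log (Real.cos ((k:ℝ)*t)) + ((k:ℝ)*t)^2/2| :=
        Finset.abs_sum_le_sum_abs _ _
    _ ≤ ∑ k ∈ Finset.Icc 1 n, 2 * |(k:ℝ)*t|^3 :=
        Finset.sum_le_sum (fun k hk => (hbnd k hk).2)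
    _ = 2 * |t|^3 * ∑ k ∈ Finset.Icc 1 n, (k:ℝ)^3 := by
        rw [Finset.mul_sum]
        apply Finset.sum_congr rfl
        intro k _
        rw [abs_mul, Nat.abs_cast, mul_pow]
        ring
    _ = 2 * |t|^3 * ((n:ℝ)^2 * (n+1)^2 / 4) := by rw [sum_cube_Icc]
    _ ≤ 2 * (n:ℝ) ^ (-(9/2 - 3*ε)) * n^2 * (n+1)^2 / 4 := by
        have ht3 : |t|^3 ≤ (n:ℝ) ^ (-(9/2 - 3*ε)) := by
          have h1 : |t|^3 ≤ ((n:ℝ) ^ (-(3/2 - ε)))^3 :=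
            pow_le_pow_left₀ (abs_nonneg t) ht 3
          have h2 : ((n:ℝ) ^ (-(3/2 - ε)))^3 = (n:ℝ) ^ (-(9/2 - 3*ε)) := by
            rw [← Real.rpow_natCast ((n:ℝ) ^ (-(3/2 - ε))) 3, ← Real.rpow_mul (le_of_lt hnpos)]
            norm_num
            ring_nf
          linarith [h2 ▸ h1]
        have hnn : (0:ℝ) ≤ (n:ℝ)^2 * (n+1)^2 / 4 := by positivity
        calc 2 * |t|^3 * ((n:ℝ)^2 * (n+1)^2 / 4)
            ≤ 2 * (n:ℝ) ^ (-(9/2 - 3*ε)) * ((n:ℝ)^2 * (n+1)^2 / 4) := by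
              apply mul_le_mul_of_nonneg_right _ hnn
              linarith
          _ = 2 * (n:ℝ) ^ (-(9/2 - 3*ε)) * n^2 * (n+1)^2 / 4 := by ring
end
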